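/- For fixed SNR > 0, the function λ ↦ SR_∞(SNR, λ) = (λ/2)^{3/2}(√(1 + 2·SNR/λ) − 1)²/SNR on (0,∞) is strictly increasing for λ < (2/3)·SNR and strictly decreasing for λ > (2/3)·SNR. Its maximum is attained at λ = (2/3)·SNR and equals √SNR / 3^{3/2}. -/

import Mathlib

open Real

lemma u_mono {a b : ℝ} (ha : 1 ≤ a) (hab : a < b) (hb : b ≤ 2) :
    (a - 1) / (a + 1) ^ 3 < (b - 1) / (b + 1) ^ 3 := by
  have ha1 : (0:ℝ) < (a + 1) ^ 3 := pow_pos (by linarith) 3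
  have hb1 : (0:ℝ) < (b + 1) ^ 3 := pow_pos (by linarith) 3
  rw [div_lt_div_iff₀ ha1 hb1]
  have hba : (0:ℝ) < b - a := by linarith
  nlinarith [mul_nonneg (mul_nonneg (sq_nonneg (a - b)) (by linarith : (0:ℝ) ≤ a + b + 4)) hba.le,
    mul_pos hba (mul_pos (by linarith : (0:ℝ) < 4 - (a + b)) (pow_pos (by linarith : (0:ℝ) < a + b + 2) 2))]

lemma u_anti {a b : ℝ} (ha : 2 ≤ a) (hab : a < b) :
    (b - 1) / (b + 1) ^ 3 < (a - 1) / (a + 1) ^ 3 := by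
  have hb2 : (2:ℝ) < b := lt_of_le_of_lt ha hab
  have ha1 : (0:ℝ) < (a + 1) ^ 3 := pow_pos (by linarith) 3
  have hb1 : (0:ℝ) < (b + 1) ^ 3 := pow_pos (by linarith) 3
  rw [div_lt_div_iff₀ hb1 ha1]
  have hba : (0:ℝ) < b - a := by linarith
  nlinarith [mul_nonneg (mul_nonneg (mul_nonneg (by linarith : (0:ℝ) ≤ a - 2) (by linarith : (0:ℝ) ≤ b - 2)) (by linarith : (0:ℝ) ≤ a + b + 4)) hba.le,
    mul_pos hba (mul_pos (by linarith : (0:ℝ) < a + b - 4) (by linarith : (0:ℝ) < a + b + 5))]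

lemma u_le {t : ℝ} (ht : 1 ≤ t) : (t - 1) / (t + 1) ^ 3 ≤ 1 / 27 := by
  have h1 : (0:ℝ) < (t + 1) ^ 3 := pow_pos (by linarith) 3
  rw [div_le_div_iff₀ h1 (by norm_num)]
  nlinarith [mul_nonneg (sq_nonneg (t - 2)) (by linarith : (0:ℝ) ≤ t + 7)]

lemma repr_lemma (SNR lam : ℝ) (hS : 0 < SNR) (hl : 0 < lam) :
    (lam / 2) ^ ((3 : ℝ) / 2) * (Real.sqrt (1 + 2 * SNR / lam) - 1) ^ 2 / SNR
      = Real.sqrt (SNR * ((Real.sqrt (1 + 2 * SNR / lam) - 1)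
          / (Real.sqrt (1 + 2 * SNR / lam) + 1) ^ 3)) := by
  set b := Real.sqrt (1 + 2 * SNR / lam) with hbdef
  have harg : (1:ℝ) < 1 + 2 * SNR / lam := by
    have : 0 < 2 * SNR / lam := by positivity
    linarith
  have hb2 : b ^ 2 = 1 + 2 * SNR / lam := Real.sq_sqrt (by linarith)
  have hb1 : 1 < b := by
    have : Real.sqrt 1 < b := Real.sqrt_lt_sqrt (by norm_num) harg
    simpa using this
  have hbm : (0:ℝ) < b - 1 := by linarith
  have hbp : (0:ℝ) < b + 1 := by linarith
  have hlam : lam = 2 * SNR / ((b - 1) * (b + 1)) := by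
    have h : lam * (b ^ 2 - 1) = 2 * SNR := by
      field_simp [hl.ne'] at hb2 ⊢
      linarith [hb2]
    rw [eq_div_iff (by nlinarith)]
    nlinarith [h]
  have hf_nonneg : 0 ≤ (lam / 2) ^ ((3 : ℝ) / 2) * (b - 1) ^ 2 / SNR := by positivity
  have hsq : ((lam / 2) ^ ((3 : ℝ) / 2)) ^ 2 = (lam / 2) ^ 3 := by
    rw [← Real.rpow_natCast ((lam / 2) ^ ((3:ℝ)/2)) 2, ← Real.rpow_mul (by positivity),
      show (3:ℝ)/2 * (2:ℕ) = ((3:ℕ):ℝ) by norm_num, Real.rpow_natCast]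
  have key : SNR * ((b - 1) / (b + 1) ^ 3)
      = ((lam / 2) ^ ((3 : ℝ) / 2) * (b - 1) ^ 2 / SNR) ^ 2 := by
    rw [div_pow, mul_pow, hsq, hlam]
    field_simp
  rw [key, Real.sqrt_sq hf_nonneg]

lemma b_gt_one (SNR lam : ℝ) (hS : 0 < SNR) (hl : 0 < lam) :
    1 < Real.sqrt (1 + 2 * SNR / lam) := by
  have harg : (1:ℝ) < 1 + 2 * SNR / lam := by
    have : 0 < 2 * SNR / lam := by positivity
    linarith
  have : Real.sqrt 1 < Real.sqrt (1 + 2 * SNR / lam) := Real.sqrt_lt_sqrt (by norm_num) harg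
  simpa using this

lemma b_anti (SNR x y : ℝ) (hS : 0 < SNR) (hx : 0 < x) (hxy : x < y) :
    Real.sqrt (1 + 2 * SNR / y) < Real.sqrt (1 + 2 * SNR / x) := by
  apply Real.sqrt_lt_sqrt
  · have : 0 < 2 * SNR / y := div_pos (by positivity) (hx.trans hxy)
    linarith
  · have : 2 * SNR / y < 2 * SNR / x := div_lt_div_of_pos_left (by positivity) hx hxy
    linarith

lemma b_ge_two (SNR lam : ℝ) (hS : 0 < SNR) (hl : 0 < lam) (h : lam ≤ 2 / 3 * SNR) :
    2 ≤ Real.sqrt (1 + 2 * SNR / lam) := by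
  have h3 : (3:ℝ) ≤ 2 * SNR / lam := by
    rw [le_div_iff₀ hl]; linarith
  have h4 : Real.sqrt 4 = 2 := by
    rw [show (4:ℝ) = 2 ^ 2 by norm_num, Real.sqrt_sq (by norm_num)]
  calc (2:ℝ) = Real.sqrt 4 := h4.symm
    _ ≤ _ := Real.sqrt_le_sqrt (by linarith)

lemma b_le_two (SNR lam : ℝ) (hS : 0 < SNR) (h : 2 / 3 * SNR ≤ lam) :
    Real.sqrt (1 + 2 * SNR / lam) ≤ 2 := by
  have hl : 0 < lam := lt_of_lt_of_le (by positivity) h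
  have h3 : 2 * SNR / lam ≤ 3 := by
    rw [div_le_iff₀ hl]; linarith
  have h4 : Real.sqrt 4 = 2 := by
    rw [show (4:ℝ) = 2 ^ 2 by norm_num, Real.sqrt_sq (by norm_num)]
  calc Real.sqrt (1 + 2 * SNR / lam) ≤ Real.sqrt 4 := Real.sqrt_le_sqrt (by linarith)
    _ = 2 := h4

theorem partialInfoSharpe_unimodal_in_lambda (SNR : ℝ) (hSNR : 0 < SNR) :
    StrictMonoOn
      (fun lam : ℝ =>
        (lam / 2) ^ ((3 : ℝ) / 2) * (Real.sqrt (1 + 2 * SNR / lam) - 1) ^ 2 / SNR)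
      (Set.Ioc 0 (2 / 3 * SNR)) ∧
    StrictAntiOn
      (fun lam : ℝ =>
        (lam / 2) ^ ((3 : ℝ) / 2) * (Real.sqrt (1 + 2 * SNR / lam) - 1) ^ 2 / SNR)
      (Set.Ici (2 / 3 * SNR)) ∧
    ((2 / 3 * SNR / 2) ^ ((3 : ℝ) / 2)
        * (Real.sqrt (1 + 2 * SNR / (2 / 3 * SNR)) - 1) ^ 2 / SNR
      = Real.sqrt SNR / 3 ^ ((3 : ℝ) / 2)) ∧
    (∀ lam : ℝ, 0 < lam →
      (lam / 2) ^ ((3 : ℝ) / 2) * (Real.sqrt (1 + 2 * SNR / lam) - 1) ^ 2 / SNR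
        ≤ Real.sqrt SNR / 3 ^ ((3 : ℝ) / 2)) := by
  have h27 : (3:ℝ) ^ ((3:ℝ)/2) = Real.sqrt 27 := by
    rw [Real.sqrt_eq_rpow, show (27:ℝ) = (3:ℝ) ^ ((3:ℕ):ℝ) by
        rw [Real.rpow_natCast]; norm_num,
      ← Real.rpow_mul (by norm_num)]
    norm_num
  refine ⟨?_, ?_, ?_, ?_⟩
  · -- strict mono on Ioc 0 (2/3*SNR)
    intro x hx y hy hxy
    have hx0 : 0 < x := hx.1
    have hy0 : 0 < y := hy.1
    simp only []
    rw [repr_lemma SNR x hSNR hx0, repr_lemma SNR y hSNR hy0]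
    apply Real.sqrt_lt_sqrt
    · apply mul_nonneg hSNR.le
      apply div_nonneg
      · linarith [b_gt_one SNR x hSNR hx0]
      · positivity
    · apply mul_lt_mul_of_pos_left _ hSNR
      exact u_anti (b_ge_two SNR y hSNR hy0 hy.2) (b_anti SNR x y hSNR hx0 hxy)
  · -- strict anti on Ici (2/3*SNR)
    intro x hx y hy hxy
    have hx0 : 0 < x := lt_of_lt_of_le (by positivity) hx
    have hy0 : 0 < y := lt_of_lt_of_le (by positivity) hy
    simp only []
    rw [repr_lemma SNR x hSNR hx0, repr_lemma SNR y hSNR hy0]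
    apply Real.sqrt_lt_sqrt
    · apply mul_nonneg hSNR.le
      apply div_nonneg
      · linarith [b_gt_one SNR y hSNR hy0]
      · positivity
    · apply mul_lt_mul_of_pos_left _ hSNR
      exact u_mono (b_gt_one SNR y hSNR hy0).le (b_anti SNR x y hSNR hx0 hxy)
        (b_le_two SNR x hSNR hx)
  · -- value at the maximum
    have h4 : 1 + 2 * SNR / (2 / 3 * SNR) = 4 := by
      field_simp
      norm_num
    rw [h4, show Real.sqrt 4 = 2 by
        rw [show (4:ℝ) = 2 ^ 2 by norm_num, Real.sqrt_sq (by norm_num)],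
      show 2 / 3 * SNR / 2 = SNR / 3 by ring]
    norm_num
    rw [Real.div_rpow hSNR.le (by norm_num), h27,
      show (3:ℝ)/2 = 1/2 + 1 by norm_num, Real.rpow_add hSNR, Real.rpow_one,
      ← Real.sqrt_eq_rpow]
    rw [show (27:ℝ) = 3 ^ 2 * 3 by norm_num]
    field_simp
  · -- global bound
    intro lam hl
    rw [repr_lemma SNR lam hSNR hl]
    have hb1 := b_gt_one SNR lam hSNR hl
    have : Real.sqrt (SNR * ((Real.sqrt (1 + 2 * SNR / lam) - 1)
        / (Real.sqrt (1 + 2 * SNR / lam) + 1) ^ 3)) ≤ Real.sqrt (SNR * (1 / 27)) := by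
      apply Real.sqrt_le_sqrt
      exact mul_le_mul_of_nonneg_left (u_le hb1.le) hSNR.le
    refine this.trans (le_of_eq ?_)
    rw [Real.sqrt_mul hSNR.le, h27, show (1/27:ℝ) = (27:ℝ)⁻¹ by norm_num,
      Real.sqrt_inv]
    ring
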